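/- For a squared K-distributed random variable γ with shape k (non-integer, k > 0) and mean parameter γ̄, the Laplace transform satisfies ∫₀^∞ e^{-x s} f(x) dx = (k/(γ̄ s))^k exp(k/(γ̄ s)) Γ(1-k, k/(γ̄ s)) for all s > 0, where f is the squared K density and Γ(·,·) is the upper incomplete Gamma function. -/

import Mathlib

open MeasureTheory Set
open Real

lemma cosh_ge_sq (t : ℝ) : t ^ 2 / 8 ≤ Real.cosh t := by
  have e1 : 1 + |t| / 2 ≤ Real.exp (|t| / 2) := by
    have := Real.add_one_le_exp (|t| / 2); linarith
  have e2 : t ^ 2 / 4 ≤ Real.exp |t| := by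
    have h0 : (0:ℝ) ≤ 1 + |t| / 2 := by positivity
    have h3 := mul_le_mul e1 e1 h0 (Real.exp_nonneg _)
    rw [← Real.exp_add, add_halves] at h3
    nlinarith [sq_abs t, abs_nonneg t]
  have e3 : Real.exp |t| / 2 ≤ Real.cosh t := by
    rcases abs_cases t with ⟨h, _⟩ | ⟨h, _⟩ <;> rw [h, Real.cosh_eq] <;>
      nlinarith [Real.exp_nonneg t, Real.exp_nonneg (-t)]
  linarith

lemma integrable_exp_sub_cosh (ν x : ℝ) (hx : 0 < x) :
    Integrable (fun t : ℝ => Real.exp (ν * t - x * Real.cosh t)) := by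
  have hint : Integrable (fun t : ℝ => Real.exp (4 / x * ν ^ 2) * Real.exp (-(x / 16) * t ^ 2)) :=
    (integrable_exp_neg_mul_sq (by positivity)).const_mul _
  refine hint.mono' (Continuous.aestronglyMeasurable (by continuity)) ?_
  filter_upwards with t
  rw [Real.norm_eq_abs, abs_of_nonneg (Real.exp_nonneg _), ← Real.exp_add]
  apply Real.exp_le_exp.mpr
  have h1 := cosh_ge_sq t
  have key : x * ν * t * 16 ≤ x ^ 2 * t ^ 2 + 64 * ν ^ 2 := by
    nlinarith [sq_nonneg (x * t - 8 * ν)]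
  have h2 : ν * t ≤ x / 16 * t ^ 2 + 4 / x * ν ^ 2 := by
    have hxne : x ≠ 0 := ne_of_gt hx
    have heq : x / 16 * t ^ 2 + 4 / x * ν ^ 2 = (x ^ 2 * t ^ 2 + 64 * ν ^ 2) / (16 * x) := by
      field_simp; ring
    rw [heq, le_div_iff₀ (by positivity)]
    nlinarith
  nlinarith

/-- Modified Bessel function of the second kind, via its integral representation. -/
noncomputable def besselK (ν x : ℝ) : ℝ :=
  ∫ t in Ioi (0:ℝ), Real.exp (-x * Real.cosh t) * Real.cosh (ν * t)

lemma exp_cosh_split (A B : ℝ) :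
    Real.exp (B - A) + Real.exp (-B - A) = 2 * (Real.exp (-A) * Real.cosh B) := by
  rw [Real.cosh_eq, Real.exp_sub, Real.exp_sub]
  simp only [div_eq_mul_inv, Real.exp_neg A]
  ring

lemma integral_line_eq_two_besselK (ν x : ℝ) (hx : 0 < x) :
    ∫ t : ℝ, Real.exp (ν * t - x * Real.cosh t) = 2 * besselK ν x := by
  have hIp := integrable_exp_sub_cosh ν x hx
  have hIm := integrable_exp_sub_cosh (-ν) x hx
  -- step 1: ∫ f = ∫ f(-t)
  have hneg : ∫ t : ℝ, Real.exp (ν * t - x * Real.cosh t)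
      = ∫ t : ℝ, Real.exp (-ν * t - x * Real.cosh t) := by
    rw [← MeasureTheory.integral_neg_eq_self (fun t => Real.exp (ν * t - x * Real.cosh t)) volume]
    congr 1; funext t; rw [Real.cosh_neg]; ring_nf
  -- step 2: average
  have havg : ∫ t : ℝ, Real.exp (ν * t - x * Real.cosh t)
      = ∫ t : ℝ, Real.exp (-x * Real.cosh t) * Real.cosh (ν * t) := by
    have hsum := MeasureTheory.integral_add hIp hIm
    have : (fun t : ℝ => Real.exp (ν * t - x * Real.cosh t)
        + Real.exp (-ν * t - x * Real.cosh t))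
        = fun t : ℝ => 2 * (Real.exp (-x * Real.cosh t) * Real.cosh (ν * t)) := by
      funext t
      have h := exp_cosh_split (x * Real.cosh t) (ν * t)
      rw [show ν * t - x * Real.cosh t = ν * t - x * Real.cosh t from rfl]
      rw [show -ν * t - x * Real.cosh t = -(ν * t) - x * Real.cosh t by ring,
        show -x * Real.cosh t = -(x * Real.cosh t) by ring]
      exact h
    rw [this, MeasureTheory.integral_const_mul] at hsum
    linarith [hneg, hsum]
  rw [havg]
  -- step 3: split line
  have hIc : Integrable (fun t : ℝ => Real.exp (-x * Real.cosh t) * Real.cosh (ν * t)) := by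
    have : (fun t : ℝ => Real.exp (-x * Real.cosh t) * Real.cosh (ν * t))
        = fun t : ℝ => (Real.exp (ν * t - x * Real.cosh t)
          + Real.exp (-ν * t - x * Real.cosh t)) / 2 := by
      funext t
      have h := exp_cosh_split (x * Real.cosh t) (ν * t)
      rw [show -ν * t - x * Real.cosh t = -(ν * t) - x * Real.cosh t by ring,
        show -x * Real.cosh t = -(x * Real.cosh t) by ring]
      linarith
    rw [this]
    exact (hIp.add hIm).div_const 2
  rw [← intervalIntegral.integral_Iic_add_Ioi (b := (0:ℝ)) hIc.integrableOn hIc.integrableOn]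
  have hleft : ∫ t in Iic (0:ℝ), Real.exp (-x * Real.cosh t) * Real.cosh (ν * t)
      = besselK ν x := by
    rw [show Iic (0:ℝ) = Iic (-0) by norm_num,
      ← integral_comp_neg_Ioi (0:ℝ) (fun t => Real.exp (-x * Real.cosh t) * Real.cosh (ν * t))]
    unfold besselK
    congr 1; funext t; rw [Real.cosh_neg, show ν * -t = -(ν * t) by ring, Real.cosh_neg]
  rw [hleft]; unfold besselK; ring

lemma cov_exp (g : ℝ → ℝ) :
    ∫ y in Ioi (0:ℝ), g y = ∫ t : ℝ, Real.exp t * g (Real.exp t) := by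
  have h := integral_image_eq_integral_abs_deriv_smul (MeasurableSet.univ)
    (fun t (_ : t ∈ univ) => (Real.hasDerivAt_exp t).hasDerivWithinAt)
    (Real.exp_injective.injOn) g
  rw [image_univ, Real.range_exp] at h
  rw [h, MeasureTheory.setIntegral_univ]
  congr 1; funext t
  rw [smul_eq_mul, abs_of_pos (Real.exp_pos t)]

lemma cov_exp_integrable (g : ℝ → ℝ) :
    IntegrableOn g (Ioi (0:ℝ)) ↔ Integrable (fun t : ℝ => Real.exp t * g (Real.exp t)) := by
  have h := integrableOn_image_iff_integrableOn_abs_deriv_smul (MeasurableSet.univ)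
    (fun t (_ : t ∈ univ) => (Real.hasDerivAt_exp t).hasDerivWithinAt)
    (Real.exp_injective.injOn) g
  rw [image_univ, Real.range_exp] at h
  rw [h]
  unfold IntegrableOn
  rw [Measure.restrict_univ]
  constructor <;> intro hi <;> refine hi.congr (by filter_upwards with t; rw [smul_eq_mul, abs_of_pos (Real.exp_pos t)]) <;> try rfl

lemma mixture_exp_eq (ν a b : ℝ) (t : ℝ) :
    Real.exp t * ((Real.exp t) ^ (ν - 1) * Real.exp (-(b * Real.exp t) - a / Real.exp t))
      = Real.exp (ν * t - (b * Real.exp t + a * Real.exp (-t))) := by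
  rw [Real.rpow_def_of_pos (Real.exp_pos t), Real.log_exp, Real.exp_neg,
    div_eq_mul_inv, ← Real.exp_add, ← Real.exp_add]
  congr 1
  ring

lemma bessel_mixture_integrand_integrable (ν a b : ℝ) (ha : 0 < a) (hb : 0 < b) :
    IntegrableOn (fun y => y ^ (ν - 1) * Real.exp (-(b * y) - a / y)) (Ioi (0:ℝ)) := by
  rw [cov_exp_integrable]
  have heq : (fun t : ℝ => Real.exp t *
      ((Real.exp t) ^ (ν - 1) * Real.exp (-(b * Real.exp t) - a / Real.exp t)))
      = fun t : ℝ => Real.exp (ν * t - (b * Real.exp t + a * Real.exp (-t))) := by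
    funext t; exact mixture_exp_eq ν a b t
  rw [heq]
  set m := min a b with hm
  have hm0 : 0 < m := lt_min ha hb
  refine (integrable_exp_sub_cosh ν (2 * m) (by positivity)).mono'
    (Continuous.aestronglyMeasurable (by continuity)) ?_
  filter_upwards with t
  rw [Real.norm_eq_abs, abs_of_nonneg (Real.exp_nonneg _)]
  apply Real.exp_le_exp.mpr
  have h1 : 2 * m * Real.cosh t ≤ b * Real.exp t + a * Real.exp (-t) := by
    rw [Real.cosh_eq]
    have h2 : m ≤ a := min_le_left a b
    have h3 : m ≤ b := min_le_right a b
    nlinarith [Real.exp_pos t, Real.exp_pos (-t)]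
  linarith

lemma bessel_mixture (ν a b : ℝ) (ha : 0 < a) (hb : 0 < b) :
    ∫ y in Ioi (0:ℝ), y ^ (ν - 1) * Real.exp (-(b * y) - a / y)
      = 2 * (a / b) ^ (ν / 2) * besselK ν (2 * Real.sqrt (a * b)) := by
  set r := Real.sqrt (a / b) with hrdef
  have hr : 0 < r := Real.sqrt_pos.mpr (by positivity)
  have hbr : Real.sqrt (a * b) = b * r := by
    rw [hrdef, show a * b = b ^ 2 * (a / b) by field_simp,
      Real.sqrt_mul (by positivity), Real.sqrt_sq hb.le]
  have har : Real.sqrt (a * b) = a / r := by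
    rw [hrdef, show a * b = a ^ 2 / (a / b) by field_simp,
      Real.sqrt_div (by positivity), Real.sqrt_sq ha.le]
  have hab : 0 < Real.sqrt (a * b) := Real.sqrt_pos.mpr (by positivity)
  rw [cov_exp]
  have heq : (fun t : ℝ => Real.exp t *
      ((Real.exp t) ^ (ν - 1) * Real.exp (-(b * Real.exp t) - a / Real.exp t)))
      = fun t : ℝ => Real.exp (ν * t - (b * Real.exp t + a * Real.exp (-t))) := by
    funext t; exact mixture_exp_eq ν a b t
  rw [heq]
  rw [← MeasureTheory.integral_add_right_eq_self
    (fun t : ℝ => Real.exp (ν * t - (b * Real.exp t + a * Real.exp (-t)))) (Real.log r)]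
  have heq2 : (fun t : ℝ => Real.exp (ν * (t + Real.log r)
      - (b * Real.exp (t + Real.log r) + a * Real.exp (-(t + Real.log r)))))
      = fun t : ℝ => r ^ ν *
        Real.exp (ν * t - 2 * Real.sqrt (a * b) * Real.cosh t) := by
    funext t
    rw [Real.exp_add, Real.cosh_eq, show -(t + Real.log r) = -t + -(Real.log r) by ring,
      Real.exp_add, Real.exp_neg (Real.log r), Real.exp_log hr,
      Real.rpow_def_of_pos hr, mul_comm (Real.log r) ν, ← Real.exp_add]
    congr 1
    have e1 : b * (Real.exp t * r) = Real.sqrt (a * b) * Real.exp t := by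
      rw [hbr]; ring
    have e2 : a * (Real.exp (-t) * r⁻¹) = Real.sqrt (a * b) * Real.exp (-t) := by
      rw [har]; field_simp
    rw [mul_add, e1, e2]  -- may not apply directly
    ring
  rw [heq2, MeasureTheory.integral_const_mul,
    integral_line_eq_two_besselK ν (2 * Real.sqrt (a * b)) (by positivity)]
  have hrpow : r ^ ν = (a / b) ^ (ν / 2) := by
    rw [hrdef, Real.sqrt_eq_rpow, ← Real.rpow_mul (by positivity)]
    congr 1; ring
  rw [hrpow]; ring

lemma exp_integral_Ioi {r : ℝ} (hr : 0 < r) :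
    ∫ x in Ioi (0:ℝ), Real.exp (-(r * x)) = 1 / r := by
  have h := integral_comp_mul_left_Ioi (fun u => Real.exp (-u)) 0 hr
  simp only [mul_zero] at h
  rw [h, integral_exp_neg_Ioi_zero, smul_eq_mul, mul_one, one_div]

lemma exp_integrableOn_Ioi {r : ℝ} (hr : 0 < r) :
    IntegrableOn (fun x : ℝ => Real.exp (-(r * x))) (Ioi (0:ℝ)) := by
  have := exp_neg_integrableOn_Ioi 0 hr
  refine this.congr_fun (fun x _ => by simp only [neg_mul]) measurableSet_Ioi

lemma gamma_integral_Ioi {k r : ℝ} (hk : 0 < k) (hr : 0 < r) :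
    ∫ y in Ioi (0:ℝ), y ^ (k - 1) * Real.exp (-(r * y)) = Real.Gamma k * r ^ (-k) := by
  have h := integral_rpow_mul_exp_neg_mul_rpow (p := 1) (q := k - 1) (b := r)
    one_pos (by linarith) hr
  simp only [Real.rpow_one] at h
  rw [show (∫ y in Ioi (0:ℝ), y ^ (k - 1) * Real.exp (-(r * y)))
      = ∫ y in Ioi (0:ℝ), y ^ (k - 1) * Real.exp (-r * y) by
    congr 1; funext y; rw [neg_mul], h]
  rw [show k - 1 + 1 = k by ring]
  rw [div_one, div_one]
  ring
lemma gamma_integrableOn_Ioi {k r : ℝ} (hk : 0 < k) (hr : 0 < r) :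
    IntegrableOn (fun y : ℝ => y ^ (k - 1) * Real.exp (-(r * y))) (Ioi (0:ℝ)) := by
  have h := integrableOn_rpow_mul_exp_neg_mul_rpow (p := 1) (s := k - 1) (b := r)
    (by linarith) one_pos hr
  refine h.congr_fun (fun y hy => ?_) measurableSet_Ioi
  simp only [Real.rpow_one, neg_mul]

/-- The squared K-distribution density with shape `k` and mean parameter `γ̄`. -/
noncomputable def sqKdensity (k γbar x : ℝ) : ℝ :=
  2 * (k / γbar) ^ ((k + 1) / 2) * x ^ ((k - 1) / 2) / Real.Gamma k *
    besselK (k - 1) (2 * Real.sqrt (k * x / γbar))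

lemma density_mixture (k γbar x : ℝ) (hk : 0 < k) (hγ : 0 < γbar) (hx : 0 < x) :
    sqKdensity k γbar x = (k / γbar) ^ k / Real.Gamma k *
      ∫ y in Ioi (0:ℝ), y ^ (k - 2) * Real.exp (-(k / γbar * y) - x / y) := by
  set c := k / γbar with hcdef
  have hc : 0 < c := by positivity
  have hmix := bessel_mixture (k - 1) x c hx hc
  have hint : (∫ y in Ioi (0:ℝ), y ^ (k - 2) * Real.exp (-(c * y) - x / y))
      = ∫ y in Ioi (0:ℝ), y ^ (k - 1 - 1) * Real.exp (-(c * y) - x / y) := by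
    congr 1; funext y; congr 1; ring
  rw [hint, hmix]
  unfold sqKdensity
  have hs : 2 * Real.sqrt (x * c) = 2 * Real.sqrt (k * x / γbar) := by
    rw [hcdef]; congr 2; ring
  rw [← hs]
  have hΓ : Real.Gamma k ≠ 0 := ne_of_gt (Real.Gamma_pos_of_pos hk)
  have hcp : (0:ℝ) < c ^ ((k - 1) / 2) := Real.rpow_pos_of_pos hc _
  have key : c ^ k * (x / c) ^ ((k - 1) / 2)
      = c ^ ((k + 1) / 2) * x ^ ((k - 1) / 2) := by
    rw [Real.div_rpow hx.le hc.le]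
    rw [show c ^ ((k + 1) / 2) = c ^ (k - (k - 1) / 2) by congr 1; ring,
      Real.rpow_sub hc]
    field_simp
  rw [← hcdef]
  linear_combination (-2 * besselK (k - 1) (2 * Real.sqrt (x * c)) / Real.Gamma k) * key

lemma phi_eq (s c k x y : ℝ) :
    Real.exp (-x * s) * (y ^ (k - 2) * Real.exp (-(c * y) - x / y))
      = (y ^ (k - 2) * Real.exp (-(c * y))) * Real.exp (-((s + 1 / y) * x)) := by
  have h : Real.exp (-x * s) * Real.exp (-(c * y) - x / y)
      = Real.exp (-(c * y)) * Real.exp (-((s + 1 / y) * x)) := by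
    rw [← Real.exp_add, ← Real.exp_add]; congr 1; ring
  calc Real.exp (-x * s) * (y ^ (k - 2) * Real.exp (-(c * y) - x / y))
      = y ^ (k - 2) * (Real.exp (-x * s) * Real.exp (-(c * y) - x / y)) := by ring
    _ = _ := by rw [h]; ring

lemma psi_eq (s c k v y : ℝ) :
    y ^ (k - 1) * Real.exp (-(c * y)) * Real.exp (-((s * y + 1) * v))
      = Real.exp (-v) * (y ^ (k - 1) * Real.exp (-((c + s * v) * y))) := by
  have h : Real.exp (-(c * y)) * Real.exp (-((s * y + 1) * v))
      = Real.exp (-v) * Real.exp (-((c + s * v) * y)) := by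
    rw [← Real.exp_add, ← Real.exp_add]; congr 1; ring
  calc y ^ (k - 1) * Real.exp (-(c * y)) * Real.exp (-((s * y + 1) * v))
      = y ^ (k - 1) * (Real.exp (-(c * y)) * Real.exp (-((s * y + 1) * v))) := by ring
    _ = _ := by rw [h]; ring

lemma inner_x_integral (k c s y : ℝ) (hs : 0 < s) (hy : 0 < y) :
    ∫ x in Ioi (0:ℝ), Real.exp (-x * s) * (y ^ (k - 2) * Real.exp (-(c * y) - x / y))
      = y ^ (k - 1) * Real.exp (-(c * y)) * (1 / (s * y + 1)) := by
  have hpos : 0 < s + 1 / y := by positivity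
  rw [show (∫ x in Ioi (0:ℝ), Real.exp (-x * s) * (y ^ (k - 2) * Real.exp (-(c * y) - x / y)))
      = ∫ x in Ioi (0:ℝ), (y ^ (k - 2) * Real.exp (-(c * y))) * Real.exp (-((s + 1 / y) * x))
      from by congr 1; funext x; exact phi_eq s c k x y]
  rw [MeasureTheory.integral_const_mul, exp_integral_Ioi hpos]
  have hy1 : y ^ (k - 1) = y ^ (k - 2) * y := by
    rw [show k - 1 = k - 2 + 1 by ring, Real.rpow_add_one (ne_of_gt hy)]
  rw [hy1]
  have : 1 / (s + 1 / y) = y * (1 / (s * y + 1)) := by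
    field_simp
  rw [this]; ring

lemma inner_x_integrable (k c s y : ℝ) (hs : 0 < s) (hy : 0 < y) :
    IntegrableOn (fun x => Real.exp (-x * s) * (y ^ (k - 2) * Real.exp (-(c * y) - x / y)))
      (Ioi (0:ℝ)) := by
  have hpos : 0 < s + 1 / y := by have := one_div_pos.mpr hy; linarith
  have h2 : IntegrableOn
      (fun x => (y ^ (k - 2) * Real.exp (-(c * y))) * Real.exp (-((s + 1 / y) * x)))
      (Ioi (0:ℝ)) := (exp_integrableOn_Ioi hpos).const_mul _
  exact h2.congr_fun (fun x _ => (phi_eq s c k x y).symm) measurableSet_Ioi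

lemma fubini1 (k c s : ℝ) (hk : 0 < k) (hc : 0 < c) (hs : 0 < s) :
    Integrable
      (fun p : ℝ × ℝ =>
        Real.exp (-p.1 * s) * (p.2 ^ (k - 2) * Real.exp (-(c * p.2) - p.1 / p.2)))
      ((volume.restrict (Ioi (0:ℝ))).prod (volume.restrict (Ioi (0:ℝ)))) := by
  have hmeas : Measurable (fun p : ℝ × ℝ =>
      Real.exp (-p.1 * s) * (p.2 ^ (k - 2) * Real.exp (-(c * p.2) - p.1 / p.2))) := by
    measurability
  rw [integrable_prod_iff' hmeas.aestronglyMeasurable]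
  constructor
  · filter_upwards [ae_restrict_mem measurableSet_Ioi] with y hy
    exact inner_x_integrable k c s y hs (mem_Ioi.mp hy)
  · have hbound : ∀ᵐ y ∂(volume.restrict (Ioi (0:ℝ))),
        ‖∫ x in Ioi (0:ℝ), ‖Real.exp (-x * s) * (y ^ (k - 2)
          * Real.exp (-(c * y) - x / y))‖‖ ≤ y ^ (k - 1) * Real.exp (-(c * y)) := by
      filter_upwards [ae_restrict_mem measurableSet_Ioi] with y hy
      rw [mem_Ioi] at hy
      have hnn : ∀ x : ℝ, 0 ≤ Real.exp (-x * s) * (y ^ (k - 2) * Real.exp (-(c * y) - x / y)) :=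
        fun x => mul_nonneg (Real.exp_nonneg _)
          (mul_nonneg (Real.rpow_nonneg hy.le _) (Real.exp_nonneg _))
      have heq : (∫ x in Ioi (0:ℝ), ‖Real.exp (-x * s) * (y ^ (k - 2)
          * Real.exp (-(c * y) - x / y))‖)
          = y ^ (k - 1) * Real.exp (-(c * y)) * (1 / (s * y + 1)) := by
        rw [← inner_x_integral k c s y hs hy]
        congr 1; funext x; rw [Real.norm_eq_abs, abs_of_nonneg (hnn x)]
      rw [heq, Real.norm_eq_abs, abs_of_nonneg (by
        have := Real.rpow_nonneg hy.le (k - 1)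
        have := Real.exp_nonneg (-(c * y))
        positivity)]
      have h1 : 1 / (s * y + 1) ≤ 1 := by
        rw [div_le_one (by positivity)]; nlinarith
      nlinarith [Real.rpow_pos_of_pos hy (k - 1), Real.exp_pos (-(c * y)),
        mul_pos (Real.rpow_pos_of_pos hy (k - 1)) (Real.exp_pos (-(c * y)))]
    refine Integrable.mono' ((gamma_integrableOn_Ioi hk hc)) ?_ hbound
    exact (hmeas.norm.aestronglyMeasurable.prod_swap.integral_prod_right')

lemma inner_y_integral (k c s v : ℝ) (hk : 0 < k) (hc : 0 < c) (hs : 0 < s) (hv : 0 < v) :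
    ∫ y in Ioi (0:ℝ), y ^ (k - 1) * Real.exp (-(c * y)) * Real.exp (-((s * y + 1) * v))
      = Real.exp (-v) * (Real.Gamma k * (c + s * v) ^ (-k)) := by
  rw [show (∫ y in Ioi (0:ℝ), y ^ (k - 1) * Real.exp (-(c * y)) * Real.exp (-((s * y + 1) * v)))
      = ∫ y in Ioi (0:ℝ), Real.exp (-v) * (y ^ (k - 1) * Real.exp (-((c + s * v) * y)))
      from by congr 1; funext y; exact psi_eq s c k v y]
  rw [MeasureTheory.integral_const_mul, gamma_integral_Ioi hk (by positivity)]

lemma inner_y_integrable (k c s v : ℝ) (hk : 0 < k) (hc : 0 < c) (hs : 0 < s) (hv : 0 < v) :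
    IntegrableOn
      (fun y => y ^ (k - 1) * Real.exp (-(c * y)) * Real.exp (-((s * y + 1) * v)))
      (Ioi (0:ℝ)) := by
  have h2 : IntegrableOn
      (fun y => Real.exp (-v) * (y ^ (k - 1) * Real.exp (-((c + s * v) * y)))) (Ioi (0:ℝ)) :=
    (gamma_integrableOn_Ioi hk (by positivity)).const_mul _
  exact h2.congr_fun (fun y _ => (psi_eq s c k v y).symm) measurableSet_Ioi

lemma fubini2 (k c s : ℝ) (hk : 0 < k) (hc : 0 < c) (hs : 0 < s) :
    Integrable
      (fun p : ℝ × ℝ =>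
        p.1 ^ (k - 1) * Real.exp (-(c * p.1)) * Real.exp (-((s * p.1 + 1) * p.2)))
      ((volume.restrict (Ioi (0:ℝ))).prod (volume.restrict (Ioi (0:ℝ)))) := by
  have hmeas : Measurable (fun p : ℝ × ℝ =>
      p.1 ^ (k - 1) * Real.exp (-(c * p.1)) * Real.exp (-((s * p.1 + 1) * p.2))) := by
    measurability
  rw [integrable_prod_iff' hmeas.aestronglyMeasurable]
  constructor
  · filter_upwards [ae_restrict_mem measurableSet_Ioi] with v hv
    exact inner_y_integrable k c s v hk hc hs (mem_Ioi.mp hv)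
  · have hbound : ∀ᵐ v ∂(volume.restrict (Ioi (0:ℝ))),
        ‖∫ y in Ioi (0:ℝ), ‖y ^ (k - 1) * Real.exp (-(c * y))
          * Real.exp (-((s * y + 1) * v))‖‖
          ≤ Real.Gamma k * c ^ (-k) * Real.exp (-(1 * v)) := by
      filter_upwards [ae_restrict_mem measurableSet_Ioi] with v hv
      rw [mem_Ioi] at hv
      have heq : (∫ y in Ioi (0:ℝ), ‖y ^ (k - 1) * Real.exp (-(c * y))
          * Real.exp (-((s * y + 1) * v))‖)
          = Real.exp (-v) * (Real.Gamma k * (c + s * v) ^ (-k)) := by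
        rw [← inner_y_integral k c s v hk hc hs hv]
        refine setIntegral_congr_fun measurableSet_Ioi (fun y hy => ?_)
        rw [mem_Ioi] at hy
        rw [Real.norm_eq_abs, abs_of_nonneg]
        exact mul_nonneg (mul_nonneg (Real.rpow_nonneg hy.le _) (Real.exp_nonneg _))
          (Real.exp_nonneg _)
      rw [heq, Real.norm_eq_abs, abs_of_nonneg (by
        have h1 : (0:ℝ) ≤ (c + s * v) ^ (-k) := Real.rpow_nonneg (by positivity) _
        have h2 := (Real.Gamma_pos_of_pos hk).le
        positivity)]
      have hle : (c + s * v) ^ (-k) ≤ c ^ (-k) :=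
        Real.rpow_le_rpow_of_nonpos hc (by nlinarith) (by linarith)
      rw [one_mul]
      have h2 := (Real.Gamma_pos_of_pos hk)
      have h3 := Real.exp_pos (-v)
      nlinarith [mul_le_mul_of_nonneg_left hle h2.le]
    refine Integrable.mono'
      (((exp_integrableOn_Ioi one_pos).const_mul (Real.Gamma k * c ^ (-k)))) ?_ hbound
    exact (hmeas.norm.aestronglyMeasurable.prod_swap.integral_prod_right')

lemma shift_Ioi (z : ℝ) (g : ℝ → ℝ) :
    ∫ t in Ioi z, g t = ∫ v in Ioi (0:ℝ), g (v + z) := by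
  have h := integral_image_eq_integral_abs_deriv_smul (f := fun v => v + z)
    (f' := fun _ => (1:ℝ)) (measurableSet_Ioi (a := (0:ℝ)))
    (fun v (_ : v ∈ Ioi (0:ℝ)) => ((hasDerivAt_id v).add_const z).hasDerivWithinAt)
    (fun u _ w _ huw => by simpa using huw) g
  rw [image_add_const_Ioi, zero_add] at h
  rw [h]
  simp

/-- Upper incomplete Gamma function `Γ(a, z) = ∫_z^∞ t^{a-1} e^{-t} dt`. -/
noncomputable def upperGamma (a z : ℝ) : ℝ :=
  ∫ t in Ioi z, t ^ (a - 1) * Real.exp (-t)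

/-- Laplace transform of the squared K-distribution (the MGF in the paper's convention):
`∫₀^∞ e^{-x s} f(x) dx = (k/(γ̄ s))^k exp(k/(γ̄ s)) Γ(1-k, k/(γ̄ s))` for `s > 0`. -/
theorem sqK_laplace_transform (k γbar : ℝ) (hk : 0 < k)
    (hknotint : ∀ n : ℤ, k ≠ (n : ℝ)) (hγ : 0 < γbar) :
    ∀ s : ℝ, 0 < s →
      ∫ x in Ioi (0:ℝ), Real.exp (-x * s) * sqKdensity k γbar x =
        (k / (γbar * s)) ^ k * Real.exp (k / (γbar * s)) *
          upperGamma (1 - k) (k / (γbar * s)) := by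
  intro s hs
  set c := k / γbar with hcdef
  have hc : 0 < c := by positivity
  have hΓ : 0 < Real.Gamma k := Real.Gamma_pos_of_pos hk
  set z := k / (γbar * s) with hzdef
  have hz : 0 < z := by positivity
  have hzc : z = c / s := by rw [hzdef, hcdef, div_div]
  -- Step 1
  have step1 : (∫ x in Ioi (0:ℝ), Real.exp (-x * s) * sqKdensity k γbar x)
      = c ^ k / Real.Gamma k * ∫ x in Ioi (0:ℝ), ∫ y in Ioi (0:ℝ),
          Real.exp (-x * s) * (y ^ (k - 2) * Real.exp (-(c * y) - x / y)) := by
    rw [← MeasureTheory.integral_const_mul]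
    refine setIntegral_congr_fun measurableSet_Ioi (fun x hx => ?_)
    rw [mem_Ioi] at hx
    rw [density_mixture k γbar x hk hγ hx, MeasureTheory.integral_const_mul, ← hcdef]
    ring
  -- Step 2: Fubini 1
  have hswap := MeasureTheory.integral_integral_swap
    (f := fun x y => Real.exp (-x * s) * (y ^ (k - 2) * Real.exp (-(c * y) - x / y)))
    (fubini1 k c s hk hc hs)
  -- Step 3: inner x integral and insert v-integral
  have step3 : (∫ y in Ioi (0:ℝ), ∫ x in Ioi (0:ℝ),
        Real.exp (-x * s) * (y ^ (k - 2) * Real.exp (-(c * y) - x / y)))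
      = ∫ y in Ioi (0:ℝ), ∫ v in Ioi (0:ℝ),
          y ^ (k - 1) * Real.exp (-(c * y)) * Real.exp (-((s * y + 1) * v)) := by
    refine setIntegral_congr_fun measurableSet_Ioi (fun y hy => ?_)
    rw [mem_Ioi] at hy
    rw [inner_x_integral k c s y hs hy, MeasureTheory.integral_const_mul,
      exp_integral_Ioi (show (0:ℝ) < s * y + 1 by positivity)]
  -- Step 4: Fubini 2
  have hswap2 := MeasureTheory.integral_integral_swap
    (f := fun y v => y ^ (k - 1) * Real.exp (-(c * y)) * Real.exp (-((s * y + 1) * v)))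
    (fubini2 k c s hk hc hs)
  -- Step 5: inner y integral
  have step5 : (∫ v in Ioi (0:ℝ), ∫ y in Ioi (0:ℝ),
        y ^ (k - 1) * Real.exp (-(c * y)) * Real.exp (-((s * y + 1) * v)))
      = ∫ v in Ioi (0:ℝ), Real.exp (-v) * (Real.Gamma k * (c + s * v) ^ (-k)) := by
    refine setIntegral_congr_fun measurableSet_Ioi (fun v hv => ?_)
    rw [mem_Ioi] at hv
    exact inner_y_integral k c s v hk hc hs hv
  -- Step 6: combine LHS
  have lhs_eq : (∫ x in Ioi (0:ℝ), Real.exp (-x * s) * sqKdensity k γbar x)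
      = c ^ k * ∫ v in Ioi (0:ℝ), Real.exp (-v) * (c + s * v) ^ (-k) := by
    rw [step1, hswap, step3, hswap2, step5]
    rw [show (∫ v in Ioi (0:ℝ), Real.exp (-v) * (Real.Gamma k * (c + s * v) ^ (-k)))
        = ∫ v in Ioi (0:ℝ), Real.Gamma k * (Real.exp (-v) * (c + s * v) ^ (-k))
        from by congr 1; funext v; ring]
    rw [MeasureTheory.integral_const_mul]
    rw [← mul_assoc, div_mul_cancel₀ _ hΓ.ne']
  -- Step 7: RHS
  have rhs_eq : z ^ k * Real.exp z * upperGamma (1 - k) z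
      = c ^ k * ∫ v in Ioi (0:ℝ), Real.exp (-v) * (c + s * v) ^ (-k) := by
    unfold upperGamma
    rw [show (1:ℝ) - k - 1 = -k by ring]
    rw [shift_Ioi z (fun t => t ^ (-k) * Real.exp (-t))]
    rw [← MeasureTheory.integral_const_mul, ← MeasureTheory.integral_const_mul]
    refine setIntegral_congr_fun measurableSet_Ioi (fun v hv => ?_)
    rw [mem_Ioi] at hv
    have hvz : v + z = (c + s * v) / s := by rw [hzc]; field_simp; ring
    have hexp : Real.exp z * Real.exp (-(v + z)) = Real.exp (-v) := by
      rw [← Real.exp_add]; congr 1; ring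
    have hpow : z ^ k * (v + z) ^ (-k) = c ^ k * (c + s * v) ^ (-k) := by
      rw [hvz, hzc, Real.div_rpow hc.le hs.le,
        Real.div_rpow (show (0:ℝ) ≤ c + s * v by positivity) hs.le,
        Real.rpow_neg hs.le k]
      have hsk : (0:ℝ) < s ^ k := Real.rpow_pos_of_pos hs k
      field_simp
    calc z ^ k * Real.exp z * ((v + z) ^ (-k) * Real.exp (-(v + z)))
        = (z ^ k * (v + z) ^ (-k)) * (Real.exp z * Real.exp (-(v + z))) := by ring
      _ = (c ^ k * (c + s * v) ^ (-k)) * Real.exp (-v) := by rw [hpow, hexp]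
      _ = c ^ k * (Real.exp (-v) * (c + s * v) ^ (-k)) := by ring
  rw [lhs_eq, ← rhs_eq]
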